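/- Let b, d be real constants and suppose (x_n)_{n≥-1}, (y_n)_{n≥-1} solve the constant-coefficient system with a = c = 1, with x_n ≠ 0 and y_n ≠ 0 for all n. Then for every n ≥ 0, y_{2n-1} = y_{-1}^{1-n}·(x_{-1}·y_0/x_0)^n·∏_{s=0}^{n-1} [(1 + 2s·b·x_0·y_{-1}) / (1 + (2s+1)·d·x_{-1}·y_0)] and y_{2n} = y_0^{n+1}·(x_{-1}/(x_0·y_{-1}))^n·∏_{s=0}^{n-1} [(1 + (2s+1)·b·x_0·y_{-1}) / (1 + (2s+2)·d·x_{-1}·y_0)], where y_{-1}^{1-n} denotes an integer power of the nonzero real y_{-1}. -/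

import Mathlib

theorem stmt_14 (x y : ℤ → ℝ) (b d : ℝ)
    (hx : ∀ n : ℤ, -1 ≤ n → x n ≠ 0) (hy : ∀ n : ℤ, -1 ≤ n → y n ≠ 0)
    (hda : ∀ n : ℕ, 1 + b * (x n * y ((n : ℤ) - 1)) ≠ 0)
    (hdc : ∀ n : ℕ, 1 + d * (x ((n : ℤ) - 1) * y n) ≠ 0)
    (hxe : ∀ n : ℕ, x ((n : ℤ) + 1) =
      x n * y ((n : ℤ) - 1) / (y n * (1 + b * (x n * y ((n : ℤ) - 1)))))
    (hye : ∀ n : ℕ, y ((n : ℤ) + 1) =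
      x ((n : ℤ) - 1) * y n / (x n * (1 + d * (x ((n : ℤ) - 1) * y n)))) :
    ∀ n : ℕ,
      y (2 * (n : ℤ) - 1) =
        y (-1) ^ (1 - (n : ℤ)) * (x (-1) * y 0 / x 0) ^ n *
          ∏ s ∈ Finset.range n,
            (1 + 2 * (s : ℝ) * b * x 0 * y (-1)) /
            (1 + (2 * (s : ℝ) + 1) * d * x (-1) * y 0) ∧
      y (2 * (n : ℤ)) =
        y 0 ^ (n + 1) * (x (-1) / (x 0 * y (-1))) ^ n *
          ∏ s ∈ Finset.range n,
            (1 + (2 * (s : ℝ) + 1) * b * x 0 * y (-1)) /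
            (1 + (2 * (s : ℝ) + 2) * d * x (-1) * y 0) := by
  have hx0 : x 0 ≠ 0 := hx 0 (by norm_num)
  have hxm1 : x (-1) ≠ 0 := hx (-1) le_rfl
  have hy0 : y 0 ≠ 0 := hy 0 (by norm_num)
  have hym1 : y (-1) ≠ 0 := hy (-1) le_rfl
  -- closed form for u_n = x_n * y_{n-1}
  have hu : ∀ n : ℕ, (1 + (n : ℝ) * b * (x 0 * y (-1)) ≠ 0) ∧
      x (n : ℤ) * y ((n : ℤ) - 1) = (x 0 * y (-1)) / (1 + (n : ℝ) * b * (x 0 * y (-1))) := by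
    intro n
    induction n with
    | zero => norm_num
    | succ n ih =>
      obtain ⟨ihne, ihe⟩ := ih
      have hbu : 1 + b * (x (n : ℤ) * y ((n : ℤ) - 1)) =
          (1 + ((n : ℝ) + 1) * b * (x 0 * y (-1))) / (1 + (n : ℝ) * b * (x 0 * y (-1))) := by
        rw [ihe, mul_div_assoc', one_add_div ihne]; ring
      have hne' : 1 + ((n : ℝ) + 1) * b * (x 0 * y (-1)) ≠ 0 := by
        intro h
        apply hda n
        rw [hbu, h, zero_div]
      have hyn : y (n : ℤ) ≠ 0 := hy n (by omega)
      have e1 : ((n + 1 : ℕ) : ℤ) = (n : ℤ) + 1 := by push_cast; ring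
      have e2 : ((n + 1 : ℕ) : ℤ) - 1 = (n : ℤ) := by push_cast; ring
      constructor
      · push_cast
        convert hne' using 2
      · rw [e2, e1, hxe n, hbu, ihe]
        push_cast
        generalize 1 + (n : ℝ) * b * (x 0 * y (-1)) = B at ihne ⊢
        generalize 1 + ((n : ℝ) + 1) * b * (x 0 * y (-1)) = D at hne' ⊢
        field_simp
  -- closed form for v_n = x_{n-1} * y_n
  have hv : ∀ n : ℕ, (1 + (n : ℝ) * d * (x (-1) * y 0) ≠ 0) ∧
      x ((n : ℤ) - 1) * y (n : ℤ) = (x (-1) * y 0) / (1 + (n : ℝ) * d * (x (-1) * y 0)) := by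
    intro n
    induction n with
    | zero => norm_num
    | succ n ih =>
      obtain ⟨ihne, ihe⟩ := ih
      have hdv : 1 + d * (x ((n : ℤ) - 1) * y (n : ℤ)) =
          (1 + ((n : ℝ) + 1) * d * (x (-1) * y 0)) / (1 + (n : ℝ) * d * (x (-1) * y 0)) := by
        rw [ihe, mul_div_assoc', one_add_div ihne]; ring
      have hne' : 1 + ((n : ℝ) + 1) * d * (x (-1) * y 0) ≠ 0 := by
        intro h
        apply hdc n
        rw [hdv, h, zero_div]
      have hxn : x (n : ℤ) ≠ 0 := hx n (by omega)
      have e1 : ((n + 1 : ℕ) : ℤ) = (n : ℤ) + 1 := by push_cast; ring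
      have e2 : ((n + 1 : ℕ) : ℤ) - 1 = (n : ℤ) := by push_cast; ring
      constructor
      · push_cast
        convert hne' using 2
      · rw [e2, e1, hye n, hdv, ihe]
        push_cast
        generalize 1 + (n : ℝ) * d * (x (-1) * y 0) = B at ihne ⊢
        generalize 1 + ((n : ℝ) + 1) * d * (x (-1) * y 0) = D at hne' ⊢
        field_simp
  -- one-step recursion for y
  have hrec : ∀ n : ℕ, y ((n : ℤ) + 1) =
      y ((n : ℤ) - 1) * (x (-1) * y 0 / x 0) * (y (-1))⁻¹ *
        ((1 + (n : ℝ) * b * (x 0 * y (-1))) / (1 + ((n : ℝ) + 1) * d * (x (-1) * y 0))) := by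
    intro n
    have hxn : x (n : ℤ) ≠ 0 := hx n (by omega)
    have h1 : x (n : ℤ) * y ((n : ℤ) + 1) = (x (-1) * y 0) / (1 + ((n : ℝ) + 1) * d * (x (-1) * y 0)) := by
      have := (hv (n + 1)).2
      have e1 : ((n + 1 : ℕ) : ℤ) = (n : ℤ) + 1 := by push_cast; ring
      have e2 : ((n + 1 : ℕ) : ℤ) - 1 = (n : ℤ) := by push_cast; ring
      rw [e2, e1] at this
      rw [this]
      push_cast
      try ring_nf
    have h2 := (hu n).2
    have hDne : 1 + ((n : ℝ) + 1) * d * (x (-1) * y 0) ≠ 0 := by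
      have h := (hv (n + 1)).1
      push_cast at h
      exact h
    have hBne := (hu n).1
    apply mul_left_cancel₀ hxn
    rw [h1]
    have : x (n:ℤ) * (y ((n:ℤ) - 1) * (x (-1) * y 0 / x 0) * (y (-1))⁻¹ *
        ((1 + (n : ℝ) * b * (x 0 * y (-1))) / (1 + ((n : ℝ) + 1) * d * (x (-1) * y 0))))
        = (x (n:ℤ) * y ((n:ℤ) - 1)) * ((x (-1) * y 0 / x 0) * (y (-1))⁻¹ *
        ((1 + (n : ℝ) * b * (x 0 * y (-1))) / (1 + ((n : ℝ) + 1) * d * (x (-1) * y 0)))) := by ring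
    rw [this, h2]
    generalize 1 + (n : ℝ) * b * (x 0 * y (-1)) = B at hBne ⊢
    generalize 1 + ((n : ℝ) + 1) * d * (x (-1) * y 0) = D at hDne ⊢
    field_simp [hDne, hBne]
  intro n
  induction n with
  | zero =>
    constructor
    · norm_num
    · norm_num
  | succ n ih =>
    obtain ⟨ih1, ih2⟩ := ih
    have hBne : ∀ k : ℕ, (1 + (k : ℝ) * b * (x 0 * y (-1)) ≠ 0) := fun k => (hu k).1
    have hDne : ∀ k : ℕ, (1 + (k : ℝ) * d * (x (-1) * y 0) ≠ 0) := fun k => (hv k).1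
    constructor
    · have e1 : 2 * ((n : ℤ) + 1) - 1 = ((2 * n : ℕ) : ℤ) + 1 := by push_cast; ring
      have e2 : ((2 * n : ℕ) : ℤ) - 1 = 2 * (n : ℤ) - 1 := by push_cast; ring
      push_cast
      rw [e1, hrec (2 * n), e2, ih1]
      rw [Finset.prod_range_succ]
      rw [show (1 : ℤ) - ((n : ℤ) + 1) = (1 - (n : ℤ)) - 1 by ring, zpow_sub_one₀ hym1]
      push_cast
      ring
    · have e1 : 2 * ((n : ℤ) + 1) = ((2 * n + 1 : ℕ) : ℤ) + 1 := by push_cast; ring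
      have e2 : ((2 * n + 1 : ℕ) : ℤ) - 1 = 2 * (n : ℤ) := by push_cast; ring
      push_cast
      rw [e1, hrec (2 * n + 1), e2, ih2]
      rw [Finset.prod_range_succ]
      push_cast
      ring
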